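/- Let f : ℝ^d → ℝ be differentiable and L-gradient Lipschitz with L ≥ 0, bounded below by f_* (i.e., f(x) ≥ f_* for all x). Let η > 0 with ηL ≤ 1, let r ≥ 0 and N ≥ 1. Let x_0, …, x_N ∈ ℝ^d and v_0, …, v_{N−1}, ξ_0, …, ξ_{N−1} ∈ ℝ^d satisfy x_{i+1} = x_i − η(v_i − ξ_i) and ‖ξ_i‖ ≤ r for every 0 ≤ i < N. Then (1/N) ∑_{i=0}^{N−1} ‖∇f(x_i)‖² ≤ 2(f(x_0) − f_*)/(ηN) + (2/N) ∑_{i=0}^{N−1} ‖v_i − ∇f(x_i)‖² + 2r²; in particular there exists 0 ≤ i < N with ‖∇f(x_i)‖² bounded by this right-hand side. -/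

import Mathlib

open InnerProductSpace intervalIntegral

lemma grad_inner {d : ℕ} (f : EuclideanSpace ℝ (Fin d) → ℝ) (z w : EuclideanSpace ℝ (Fin d)) :
    ⟪gradient f z, w⟫_ℝ = fderiv ℝ f z w := by
  rw [gradient, toDual_symm_apply]

lemma descent {d : ℕ} (f : EuclideanSpace ℝ (Fin d) → ℝ) (L : ℝ)
    (hL : 0 ≤ L) (hf : Differentiable ℝ f)
    (hlip : ∀ x y : EuclideanSpace ℝ (Fin d),
      ‖gradient f x - gradient f y‖ ≤ L * ‖x - y‖)
    (x y : EuclideanSpace ℝ (Fin d)) :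
    f y ≤ f x + ⟪gradient f x, y - x⟫_ℝ + L / 2 * ‖y - x‖ ^ 2 := by
  set u := y - x with hu
  set p : ℝ → EuclideanSpace ℝ (Fin d) := fun t => x + t • u with hp
  have hcgrad : Continuous (fun z => gradient f z) :=
    (LipschitzWith.of_dist_le_mul (K := L.toNNReal) (fun a b => by
      rw [dist_eq_norm, dist_eq_norm, Real.coe_toNNReal L hL]
      exact hlip a b)).continuous
  have hderiv : ∀ t : ℝ, HasDerivAt (fun s => f (p s)) (⟪gradient f (p t), u⟫_ℝ) t := by
    intro t
    have h1 : HasDerivAt p u t := by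
      have : HasDerivAt (fun s : ℝ => s • u) ((1:ℝ) • u) t :=
        (hasDerivAt_id t).smul_const u
      simpa [hp] using this.const_add x
    have h2 := (hf (p t)).hasFDerivAt.comp_hasDerivAt t h1
    rw [grad_inner]
    exact h2
  have hcont : Continuous fun t => ⟪gradient f (p t), u⟫_ℝ := by
    apply Continuous.inner (hcgrad.comp (by continuity)) continuous_const
  have hFTC : f (p 1) - f (p 0) = ∫ t in (0:ℝ)..1, ⟪gradient f (p t), u⟫_ℝ :=
    (integral_eq_sub_of_hasDerivAt (fun t _ => hderiv t)
      (hcont.intervalIntegrable 0 1)).symm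
  have hbound : ∀ t ∈ Set.Icc (0:ℝ) 1,
      ⟪gradient f (p t), u⟫_ℝ ≤ ⟪gradient f x, u⟫_ℝ + (L * ‖u‖ ^ 2) * t := by
    intro t ht
    have h1 : ⟪gradient f (p t), u⟫_ℝ - ⟪gradient f x, u⟫_ℝ
        = ⟪gradient f (p t) - gradient f x, u⟫_ℝ := by
      rw [inner_sub_left]
    have h2 : ⟪gradient f (p t) - gradient f x, u⟫_ℝ ≤ ‖gradient f (p t) - gradient f x‖ * ‖u‖ :=
      real_inner_le_norm _ _
    have h3 : ‖gradient f (p t) - gradient f x‖ ≤ L * (t * ‖u‖) := by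
      have := hlip (p t) x
      simpa [hp, norm_smul, abs_of_nonneg ht.1, mul_assoc] using this
    nlinarith [norm_nonneg u, norm_nonneg (gradient f (p t) - gradient f x), ht.1]
  have hint : (∫ t in (0:ℝ)..1, ⟪gradient f (p t), u⟫_ℝ)
      ≤ ∫ t in (0:ℝ)..1, (⟪gradient f x, u⟫_ℝ + (L * ‖u‖ ^ 2) * t) := by
    apply integral_mono_on (by norm_num) (hcont.intervalIntegrable 0 1)
      ((by continuity : Continuous fun t : ℝ => ⟪gradient f x, u⟫_ℝ + (L * ‖u‖ ^ 2) * t).intervalIntegrable 0 1)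
      hbound
  have hval : (∫ t in (0:ℝ)..1, (⟪gradient f x, u⟫_ℝ + (L * ‖u‖ ^ 2) * t))
      = ⟪gradient f x, u⟫_ℝ + L / 2 * ‖u‖ ^ 2 := by
    have h1 : (∫ t in (0:ℝ)..1, (⟪gradient f x, u⟫_ℝ + (L * ‖u‖ ^ 2) * t))
        = (∫ t in (0:ℝ)..1, ⟪gradient f x, u⟫_ℝ)
          + ∫ t in (0:ℝ)..1, (L * ‖u‖ ^ 2) * t :=
      integral_add intervalIntegrable_const
        ((continuous_const.mul continuous_id').intervalIntegrable 0 1)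
    rw [h1, integral_const, integral_const_mul, integral_id]
    norm_num
    ring
  have hp0 : p 0 = x := by simp [hp]
  have hp1 : p 1 = y := by simp [hp, hu]
  rw [hp0, hp1] at hFTC
  linarith [hint, hFTC, hval.le, hval.ge]

set_option maxHeartbeats 1000000 in
/-- Average gradient-norm bound along the perturbed update, together with the
existence of an iterate with small gradient. -/
theorem stmt_4 {d : ℕ} (f : EuclideanSpace ℝ (Fin d) → ℝ) (L : ℝ) (hL : 0 ≤ L)
    (hf : Differentiable ℝ f)
    (hlip : ∀ x y : EuclideanSpace ℝ (Fin d),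
      ‖gradient f x - gradient f y‖ ≤ L * ‖x - y‖)
    (fstar : ℝ) (hbelow : ∀ x, fstar ≤ f x)
    (η r : ℝ) (hη : 0 < η) (hηL : η * L ≤ 1) (hr : 0 ≤ r) (N : ℕ) (hN : 1 ≤ N)
    (x v ξ : ℕ → EuclideanSpace ℝ (Fin d))
    (hupd : ∀ i < N, x (i + 1) = x i - η • (v i - ξ i))
    (hξ : ∀ i < N, ‖ξ i‖ ≤ r) :
    (1 / (N : ℝ)) * ∑ i ∈ Finset.range N, ‖gradient f (x i)‖ ^ 2 ≤
      2 * (f (x 0) - fstar) / (η * N)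
        + (2 / (N : ℝ)) * ∑ i ∈ Finset.range N, ‖v i - gradient f (x i)‖ ^ 2
        + 2 * r ^ 2
    ∧ ∃ i < N, ‖gradient f (x i)‖ ^ 2 ≤
        2 * (f (x 0) - fstar) / (η * N)
          + (2 / (N : ℝ)) * ∑ i ∈ Finset.range N, ‖v i - gradient f (x i)‖ ^ 2
          + 2 * r ^ 2 := by
  set g : ℕ → EuclideanSpace ℝ (Fin d) := fun i => gradient f (x i) with hg
  set S := ∑ i ∈ Finset.range N, ‖g i‖ ^ 2 with hS
  set T := ∑ i ∈ Finset.range N, ‖v i - g i‖ ^ 2 with hT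
  have hNpos : (0:ℝ) < N := by exact_mod_cast Nat.lt_of_lt_of_le Nat.zero_lt_one hN
  -- per-step inequality
  have step : ∀ i < N, η / 2 * ‖g i‖ ^ 2
      ≤ f (x i) - f (x (i+1)) + η * (‖v i - g i‖ ^ 2 + r ^ 2) := by
    intro i hi
    set u := v i - ξ i with hu
    have hdiff : x (i+1) - x i = (-η) • u := by
      rw [hupd i hi, sub_sub_cancel_left, neg_smul]
    have hd := descent f L hL hf hlip (x i) (x (i+1))
    rw [hdiff] at hd
    have e1 : ⟪g i, (-η) • u⟫_ℝ = -η * ⟪g i, u⟫_ℝ := real_inner_smul_right _ _ _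
    have e2 : ‖(-η) • u‖ ^ 2 = η ^ 2 * ‖u‖ ^ 2 := by
      rw [norm_smul, mul_pow, Real.norm_eq_abs, abs_neg, abs_of_pos hη]
    rw [e1, e2] at hd
    -- f (x (i+1)) ≤ f (x i) - η ⟪g,u⟫ + L/2 η² ‖u‖²
    have e3 : L / 2 * (η ^ 2 * ‖u‖ ^ 2) ≤ η / 2 * ‖u‖ ^ 2 := by
      nlinarith [sq_nonneg ‖u‖, hη.le]
    have e4 : ‖u - g i‖ ^ 2 = ‖u‖ ^ 2 - 2 * ⟪u, g i⟫_ℝ + ‖g i‖ ^ 2 :=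
      norm_sub_sq_real u (g i)
    have e5 : ⟪g i, u⟫_ℝ = ⟪u, g i⟫_ℝ := real_inner_comm _ _
    have e6 : ‖u - g i‖ ^ 2 ≤ 2 * ‖v i - g i‖ ^ 2 + 2 * r ^ 2 := by
      have h7 : u - g i = (v i - g i) - ξ i := by rw [hu]; abel
      have h8 : ‖u - g i‖ ≤ ‖v i - g i‖ + ‖ξ i‖ := by
        rw [h7]; exact norm_sub_le _ _
      have h9 := hξ i hi
      nlinarith [norm_nonneg (u - g i), norm_nonneg (v i - g i), norm_nonneg (ξ i),
        sq_nonneg (‖v i - g i‖ - ‖ξ i‖)]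
    nlinarith [hd, e3]
  -- sum it up
  have hsum : η / 2 * S ≤ (f (x 0) - f (x N)) + (η * T + η * N * r ^ 2) := by
    have h0 : ∑ i ∈ Finset.range N, (η / 2 * ‖g i‖ ^ 2)
        ≤ ∑ i ∈ Finset.range N, (f (x i) - f (x (i+1)) + η * (‖v i - g i‖ ^ 2 + r ^ 2)) :=
      Finset.sum_le_sum (fun i hi => step i (Finset.mem_range.1 hi))
    rw [← Finset.mul_sum, ← hS] at h0
    rw [Finset.sum_add_distrib, Finset.sum_range_sub' (fun i => f (x i)) N] at h0
    have e : ∑ i ∈ Finset.range N, (η * (‖v i - g i‖ ^ 2 + r ^ 2))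
        = η * T + η * N * r ^ 2 := by
      simp [mul_add, Finset.sum_add_distrib, ← Finset.mul_sum, hT, Finset.sum_const,
        nsmul_eq_mul]
      ring
    rw [e] at h0
    exact h0
  have hfin : η / 2 * S ≤ (f (x 0) - fstar) + (η * T + η * N * r ^ 2) := by
    have := hbelow (x N); linarith
  have main : (1 / (N : ℝ)) * S ≤
      2 * (f (x 0) - fstar) / (η * N) + (2 / (N : ℝ)) * T + 2 * r ^ 2 := by
    have hηN : (0:ℝ) < η * N := mul_pos hη hNpos
    have h2 : η * S ≤ 2 * (f (x 0) - fstar) + 2 * η * T + 2 * η * N * r ^ 2 := by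
      linarith
    calc (1 / (N : ℝ)) * S = (η * S) / (η * N) := by
          field_simp
        _ ≤ (2 * (f (x 0) - fstar) + 2 * η * T + 2 * η * N * r ^ 2) / (η * N) :=
          (div_le_div_iff_of_pos_right hηN).2 h2
        _ = 2 * (f (x 0) - fstar) / (η * N) + (2 / (N : ℝ)) * T + 2 * r ^ 2 := by
          field_simp
  refine ⟨main, ?_⟩
  have hne : (Finset.range N).Nonempty := Finset.nonempty_range_iff.2 (by omega)
  obtain ⟨i, hi, hle⟩ := Finset.exists_le_of_sum_le hne
    (le_of_eq (by rw [Finset.sum_const, Finset.card_range, nsmul_eq_mul]; field_simp :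
      S = ∑ _i ∈ Finset.range N, (1 / (N : ℝ)) * S))
  exact ⟨i, Finset.mem_range.1 hi, le_trans hle main⟩
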